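/- Let A ∈ ℝ^{k×k} be invertible, B ∈ ℝ^{k×1}, C ∈ ℝ^{1×k}, M > 0, D ∈ ℝ, and suppose the pair (A, −B) is controllable, i.e. for every λ ∈ ℂ the k×(k+1) matrix [A − λI −B] has rank k. Define 𝒜 ∈ ℝ^{(k+2)×(k+2)} and ℬ ∈ ℝ^{(k+2)×1} by 𝒜 = [[0, 1, 0],[0, −M^{-1}D, M^{-1}C],[0, −B, A]] and ℬ = [0; M^{-1}; 0]. Then the pair (𝒜, ℬ) is controllable: for every λ ∈ ℂ the matrix [𝒜 − λI ℬ] has rank k+2. -/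

import Mathlib

open Matrix

lemma rank_eq_card_of_vecMul_injective {m n : Type*} [Fintype m] [Fintype n]
    (Mt : Matrix m n ℂ) (h : ∀ v : m → ℂ, v ᵥ* Mt = 0 → v = 0) :
    Mt.rank = Fintype.card m := by
  apply LinearIndependent.rank_matrix
  rw [Fintype.linearIndependent_iff]
  intro g hg
  have : g ᵥ* Mt = 0 := by
    funext j
    have := congrFun hg j
    simpa [vecMul, dotProduct, Finset.sum_apply] using this
  exact fun i => congrFun (h g this) i

lemma vecMul_eq_zero_of_rank_eq_card {m n : Type*} [Fintype m] [Fintype n]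
    (Mt : Matrix m n ℂ) (h : Mt.rank = Fintype.card m)
    (v : m → ℂ) (hv : v ᵥ* Mt = 0) : v = 0 := by
  have hli : LinearIndependent ℂ Mt.row := by
    rw [linearIndependent_iff_card_eq_finrank_span]
    rw [rank_eq_finrank_span_row] at h
    exact h.symm
  rw [Fintype.linearIndependent_iff] at hli
  funext i
  refine hli v ?_ i
  funext j
  have := congrFun hv j
  simpa [vecMul, dotProduct, Finset.sum_apply, Matrix.row] using this

theorem pbh_controllability_bus_realization {k : ℕ}
    (A : Matrix (Fin k) (Fin k) ℝ) (B : Matrix (Fin k) (Fin 1) ℝ)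
    (C : Matrix (Fin 1) (Fin k) ℝ) (M D : ℝ) (hM : 0 < M) (hA : IsUnit A.det)
    (hctrb : ∀ lam : ℂ,
      (Matrix.fromCols (A.map (fun x : ℝ => (x : ℂ)) - lam • 1)
        ((-B).map (fun x : ℝ => (x : ℂ)))).rank = k) :
    ∀ lam : ℂ,
      (Matrix.fromCols
        ((Matrix.fromBlocks (0 : Matrix (Fin 1) (Fin 1) ℝ)
            (Matrix.fromCols (Matrix.of fun _ _ => (1 : ℝ)) (0 : Matrix (Fin 1) (Fin k) ℝ))
            (0 : Matrix (Fin 1 ⊕ Fin k) (Fin 1) ℝ)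
            (Matrix.fromBlocks (Matrix.of fun _ _ => -(M⁻¹ * D)) (M⁻¹ • C) (-B) A)).map
              (fun x : ℝ => (x : ℂ))
          - lam • 1)
        ((Matrix.fromRows (0 : Matrix (Fin 1) (Fin 1) ℝ)
            (Matrix.fromRows (Matrix.of fun _ _ => M⁻¹) (0 : Matrix (Fin k) (Fin 1) ℝ))).map
              (fun x : ℝ => (x : ℂ)))).rank = k + 2 := by
  intro lam
  have hcard : Fintype.card (Fin 1 ⊕ (Fin 1 ⊕ Fin k)) = k + 2 := by simp; omega
  rw [← hcard]
  apply rank_eq_card_of_vecMul_injective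
  intro v hv
  have hMne : (M : ℂ) ≠ 0 := by simp [hM.ne']
  -- b = 0
  have hb0 : v (Sum.inr (Sum.inl 0)) = 0 := by
    have := congrFun hv (Sum.inr 0)
    simp [vecMul, dotProduct, Fintype.sum_sum_type, fromCols, fromRows_apply_inl, fromRows_apply_inr, fromBlocks] at this
    tauto
  have h1 : lam * v (Sum.inl 0) = 0 := by
    have := congrFun hv (Sum.inl (Sum.inl 0))
    simp [vecMul, dotProduct, Fintype.sum_sum_type, fromCols, fromRows_apply_inl, fromRows_apply_inr, fromBlocks,
      Matrix.one_apply] at this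
    rcases this with h | h <;> simp [h]
  have h2 : v (Sum.inl 0) + -∑ x, v (Sum.inr (Sum.inr x)) * (B x 0 : ℂ) = 0 := by
    have := congrFun hv (Sum.inl (Sum.inr (Sum.inl 0)))
    simpa [vecMul, dotProduct, Fintype.sum_sum_type, fromCols, fromRows_apply_inl, fromRows_apply_inr, fromBlocks,
      Matrix.one_apply, hb0] using this
  have h3 : ∀ p : Fin k,
      ∑ x, v (Sum.inr (Sum.inr x)) * ((A x p : ℂ) - if x = p then lam else 0) = 0 := by
    intro p
    have := congrFun hv (Sum.inl (Sum.inr (Sum.inr p)))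
    simpa [vecMul, dotProduct, Fintype.sum_sum_type, fromCols, fromRows_apply_inl, fromRows_apply_inr, fromBlocks,
      Matrix.one_apply, hb0] using this
  -- w = 0 and a = 0
  set w : Fin k → ℂ := fun i => v (Sum.inr (Sum.inr i)) with hwdef
  have hw0 : w = 0 := by
    by_cases hlam : lam = 0
    · -- A invertible case
      have hAu : IsUnit (A.map (fun x : ℝ => (x : ℂ))).det := by
        have := hA.map (algebraMap ℝ ℂ)
        rwa [RingHom.map_det] at this
      have hinj := vecMul_injective_iff_isUnit.mpr ((Matrix.isUnit_iff_isUnit_det _).mpr hAu)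
      have : w ᵥ* (A.map (fun x : ℝ => (x : ℂ))) = 0 := by
        funext p
        have := h3 p
        simpa [vecMul, dotProduct, hlam] using this
      have h0 : (0 : Fin k → ℂ) ᵥ* (A.map (fun x : ℝ => (x : ℂ))) = 0 := by
        simp
      exact hinj (this.trans h0.symm)
    · have ha0 : v (Sum.inl 0) = 0 := by
        rcases mul_eq_zero.mp h1 with h | h
        · exact absurd h hlam
        · exact h
      refine vecMul_eq_zero_of_rank_eq_card
          (Matrix.fromCols (A.map (fun x : ℝ => (x : ℂ)) - lam • 1)
            ((-B).map (fun x : ℝ => (x : ℂ)))) ?_ w ?_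
      · rw [hctrb lam]; simp
      · rw [vecMul_fromCols]
        funext j
        rcases j with p | j
        · have := h3 p
          simpa [vecMul, dotProduct, Matrix.sub_apply, Matrix.smul_apply, one_apply, mul_ite,
            Pi.zero_apply, Sum.elim_inl] using this
        · have := h2
          rw [ha0, zero_add] at this
          fin_cases j
          simpa [vecMul, dotProduct, neg_mul, Finset.sum_neg_distrib] using this
  have ha0 : v (Sum.inl 0) = 0 := by
    have := h2
    rw [show (∑ x, v (Sum.inr (Sum.inr x)) * (B x 0 : ℂ)) = 0 from ?_, neg_zero, add_zero] at this
    · exact this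
    · refine Finset.sum_eq_zero fun x _ => ?_
      have : w x = 0 := congrFun hw0 x
      simp [hwdef] at this
      simp [this]
  funext i
  rcases i with i | i | i
  · fin_cases i; exact ha0
  · fin_cases i; exact hb0
  · exact congrFun hw0 i
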